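/- Let P and Q be vector subspaces of R^n and let v be a unit vector of R^n not contained in the orthogonal complement of Q. Then the angle between P ∩ v^⊥ and Q ∩ v^⊥ is at most 2·∠(P,Q)/d(v, Q^⊥), where for subspaces E, F the angle is defined as ∠(E,F) := sup_{u ∈ E, |u| ≤ 1} d(u, F) and d denotes Euclidean distance. -/

import Mathlib

open Metric Set
open scoped RealInnerProductSpace

/-- The angle `∠(E,F) := sup { d(u,F) : u ∈ E, ‖u‖ ≤ 1 }` between two subspaces. -/
noncomputable def subAngle {n : ℕ} (E F : Submodule ℝ (EuclideanSpace ℝ (Fin n))) : ℝ :=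
  sSup {r : ℝ | ∃ u ∈ E, ‖u‖ ≤ 1 ∧ r = Metric.infDist u (F : Set (EuclideanSpace ℝ (Fin n)))}

/-- For subspaces `P, Q` of `ℝⁿ` and a unit vector `v ∉ Qᗮ`,
`∠(P ∩ v^⊥, Q ∩ v^⊥) ≤ 2 ∠(P,Q) / d(v, Qᗮ)`. -/
theorem stmt0 {n : ℕ} (P Q : Submodule ℝ (EuclideanSpace ℝ (Fin n)))
    (v : EuclideanSpace ℝ (Fin n)) (hv : ‖v‖ = 1) (hvQ : v ∉ Qᗮ) :
    subAngle (P ⊓ (ℝ ∙ v)ᗮ) (Q ⊓ (ℝ ∙ v)ᗮ) ≤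
      2 * subAngle P Q / Metric.infDist v (Qᗮ : Set (EuclideanSpace ℝ (Fin n))) := by
  set ε : ℝ := Metric.infDist v (Qᗮ : Set (EuclideanSpace ℝ (Fin n))) with hεdef
  set δ : ℝ := subAngle P Q with hδdef
  have hQc : IsClosed (Q : Set (EuclideanSpace ℝ (Fin n))) := Q.closed_of_finiteDimensional
  have hQoc : IsClosed ((Qᗮ : Submodule ℝ (EuclideanSpace ℝ (Fin n))) :
      Set (EuclideanSpace ℝ (Fin n))) := Qᗮ.closed_of_finiteDimensional
  have hεpos : 0 < ε := by
    rw [hεdef]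
    exact (hQoc.notMem_iff_infDist_pos ⟨0, Qᗮ.zero_mem⟩).1 hvQ
  have hε1 : ε ≤ 1 := by
    have := Metric.infDist_le_dist_of_mem (x := v) (Submodule.zero_mem Qᗮ)
    simpa [hv] using this
  -- the projection of v onto Q
  set w : EuclideanSpace ℝ (Fin n) := (Q.orthogonalProjectionOnto v : EuclideanSpace ℝ (Fin n))
    with hwdef
  have hwQ : w ∈ Q := (Q.orthogonalProjectionOnto v).2
  have hvwQo : v - w ∈ Qᗮ := Submodule.sub_starProjection_mem_orthogonal (K := Q) v
  have hεw : ε ≤ ‖w‖ := by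
    have := Metric.infDist_le_dist_of_mem (x := v) hvwQo
    simpa [dist_eq_norm] using this
  have hwpos : 0 < ‖w‖ := lt_of_lt_of_le hεpos hεw
  have hvw : ⟪v, w⟫ = ‖w‖ ^ 2 := by
    have h0 : ⟪w, v - w⟫ = (0:ℝ) := hvwQo w hwQ
    have h1 : ⟪w, v⟫ - ⟪w, w⟫ = (0:ℝ) := by rwa [inner_sub_right] at h0
    rw [real_inner_self_eq_norm_sq] at h1
    rw [real_inner_comm]
    linarith
  -- bounds on δ
  have hbddP : BddAbove {r : ℝ | ∃ u ∈ P, ‖u‖ ≤ 1 ∧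
      r = Metric.infDist u (Q : Set (EuclideanSpace ℝ (Fin n)))} := by
    refine ⟨1, fun r hr => ?_⟩
    obtain ⟨u, _, hu1, rfl⟩ := hr
    have := Metric.infDist_le_dist_of_mem (x := u) (Submodule.zero_mem Q)
    simpa using this.trans (by simpa using hu1)
  have hδ0 : 0 ≤ δ := by
    rw [hδdef, subAngle]
    refine le_csSup hbddP ⟨0, P.zero_mem, by simp, ?_⟩
    rw [eq_comm, Metric.infDist_zero_of_mem (Submodule.zero_mem Q)]
  -- main bound, elementwise
  refine Real.sSup_le ?_ (by positivity)
  rintro r ⟨u, hu, hu1, rfl⟩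
  obtain ⟨huP, huv⟩ := (Submodule.mem_inf.1 hu)
  have huv' : ⟪v, u⟫ = 0 := Submodule.mem_orthogonal_singleton_iff_inner_right.1 huv
  -- nearest point q in Q
  have hdistδ : Metric.infDist u (Q : Set (EuclideanSpace ℝ (Fin n))) ≤ δ := by
    rw [hδdef, subAngle]
    exact le_csSup hbddP ⟨u, huP, hu1, rfl⟩
  obtain ⟨q, hqQ, hq⟩ := hQc.exists_infDist_eq_dist ⟨0, Submodule.zero_mem Q⟩ u
  have hq' : ‖u - q‖ ≤ δ := by rw [← dist_eq_norm, ← hq]; exact hdistδ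
  -- correct q to be orthogonal to v
  set c : ℝ := ⟪v, q⟫ / ‖w‖ ^ 2 with hcdef
  set q' : EuclideanSpace ℝ (Fin n) := q - c • w with hq'def
  have hq'Q : q' ∈ Q ⊓ (ℝ ∙ v)ᗮ := by
    refine Submodule.mem_inf.2 ⟨Q.sub_mem hqQ (Q.smul_mem c hwQ), ?_⟩
    rw [Submodule.mem_orthogonal_singleton_iff_inner_right, hq'def, inner_sub_right,
      inner_smul_right, hvw, hcdef]
    field_simp
    ring
  have hinner_bound : |⟪v, q⟫| ≤ δ := by
    have : ⟪v, q⟫ = ⟪v, q - u⟫ := by rw [inner_sub_right, huv']; ring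
    rw [this]
    calc |⟪v, q - u⟫| ≤ ‖v‖ * ‖q - u‖ := abs_real_inner_le_norm _ _
      _ = ‖u - q‖ := by rw [hv, one_mul, norm_sub_rev]
      _ ≤ δ := hq'
  have hkey : ‖u - q'‖ ≤ δ + δ / ‖w‖ := by
    have h1 : u - q' = (u - q) + c • w := by rw [hq'def]; abel
    calc ‖u - q'‖ ≤ ‖u - q‖ + ‖c • w‖ := by rw [h1]; exact norm_add_le _ _
      _ = ‖u - q‖ + |c| * ‖w‖ := by rw [norm_smul, Real.norm_eq_abs]
      _ ≤ δ + δ / ‖w‖ := by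
          refine add_le_add hq' ?_
          rw [hcdef, abs_div, abs_of_nonneg (by positivity : (0:ℝ) ≤ ‖w‖ ^ 2),
            div_mul_eq_mul_div, pow_two, ← div_div, mul_div_assoc,
            div_self (ne_of_gt hwpos), mul_one]
          gcongr
  have hfinal : Metric.infDist u ((Q ⊓ (ℝ ∙ v)ᗮ : Submodule ℝ (EuclideanSpace ℝ (Fin n))) :
      Set (EuclideanSpace ℝ (Fin n))) ≤ δ + δ / ‖w‖ := by
    refine le_trans (Metric.infDist_le_dist_of_mem hq'Q) ?_
    rwa [dist_eq_norm]
  refine hfinal.trans ?_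
  have h2 : δ / ‖w‖ ≤ δ / ε := div_le_div_of_nonneg_left hδ0 hεpos hεw |>.trans_eq rfl
  have h3 : δ ≤ δ / ε := by
    rw [le_div_iff₀ hεpos]
    nlinarith
  have h4 : 2 * δ / ε = δ / ε + δ / ε := by ring
  linarith
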